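/- Cyclic subspace assignment in the proof of Theorem 11 (alignment sets that are cycles without forks): For all integers Δ ≥ 1 and l ≥ 2Δ, there exist ℂ-linear subspaces E_1, …, E_l of ℂ^{2Δ+1}, each of dimension Δ, such that, reading indices modulo l: (i) dim(E_k + E_{k+1}) ≤ Δ + 1 for every k; (ii) E_j ∩ E_k = {0} whenever the cyclic distance min(|j−k|, l−|j−k|) between j and k is at least Δ; and (iii) E_w ∩ (E_u + E_{u+1}) = {0} whenever both cyclic distances from w to u and from w to u+1 are at least Δ. -/

import Mathlib

lemma moment_indep {n N : ℕ} (hn : n ≤ N) (x : Fin n → ℂ) (hx : Function.Injective x) :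
    LinearIndependent ℂ (fun i => fun j : Fin N => x i ^ (j : ℕ)) := by
  have hdet : (Matrix.vandermonde x).det ≠ 0 := Matrix.det_vandermonde_ne_zero_iff.2 hx
  have hrows : LinearIndependent ℂ (fun i => Matrix.vandermonde x i) :=
    Matrix.linearIndependent_rows_iff_isUnit.2
      ((Matrix.isUnit_iff_isUnit_det _).2 (isUnit_iff_ne_zero.2 hdet))
  apply LinearIndependent.of_comp (LinearMap.funLeft ℂ ℂ (Fin.castLE hn))
  convert hrows with i
  funext j
  simp [Matrix.vandermonde_apply, LinearMap.funLeft_apply]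


lemma vand_indep {l N : ℕ} (s : Finset (Fin l)) (hs : s.card ≤ N) :
    LinearIndependent ℂ (fun i : s => fun j : Fin N => (((i : Fin l) : ℕ) : ℂ) ^ (j : ℕ)) := by
  let e : ↥s ≃ Fin s.card := s.equivFin
  set x : Fin s.card → ℂ := fun i => (((e.symm i : Fin l) : ℕ) : ℂ) with hxdef
  have hx : Function.Injective x := by
    intro i j h
    have : ((e.symm i : Fin l) : ℕ) = ((e.symm j : Fin l) : ℕ) := Nat.cast_injective h
    exact e.symm.injective (Subtype.ext (Fin.val_injective this))
  have h := (moment_indep hs x hx).comp e e.injective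
  convert h with i
  simp [hxdef]

lemma disj_span {l N : ℕ} (v : Fin l → (Fin N → ℂ)) (s t : Finset (Fin l))
    (hd : Disjoint s t)
    (h : LinearIndependent ℂ (fun i : (↑(s ∪ t) : Set (Fin l)) => v i)) :
    Submodule.span ℂ (v '' ↑s) ⊓ Submodule.span ℂ (v '' ↑t) = ⊥ := by
  have key : ∀ w : Finset (Fin l), ↑w ⊆ (↑(s ∪ t) : Set (Fin l)) →
      (fun i : (↑(s ∪ t) : Set (Fin l)) => v i) '' (Subtype.val ⁻¹' ↑w) = v '' ↑w := by
    intro w hw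
    rw [show (fun i : (↑(s ∪ t) : Set (Fin l)) => v i) = v ∘ Subtype.val from rfl,
      Set.image_comp, Subtype.image_preimage_coe, Set.inter_eq_right.2 hw]
  have hdisj : Disjoint (Subtype.val ⁻¹' (↑s : Set (Fin l)) : Set (↑(s ∪ t) : Set (Fin l)))
      (Subtype.val ⁻¹' ↑t) := by
    rw [Set.disjoint_iff_inter_eq_empty, ← Set.preimage_inter]
    have : (↑s ∩ ↑t : Set (Fin l)) = ∅ := by
      rw [Set.eq_empty_iff_forall_notMem]
      intro a ha
      exact (Finset.disjoint_left.1 hd) ha.1 ha.2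
    simp [this]
  have := h.disjoint_span_image hdisj
  rw [key s (by simp [Finset.coe_union]), key t (by simp [Finset.coe_union])] at this
  exact disjoint_iff.1 this


open Fin.NatCast

/-- **Cyclic subspace assignment in the proof of Theorem 11** (alignment sets
that are cycles without forks). For `Δ ≥ 1` and `l ≥ 2Δ` there are
`Δ`-dimensional subspaces `E 1, …, E l` of `ℂ^{2Δ+1}` such that, cyclically:
(i) adjacent subspaces together span at most `Δ+1` dimensions;
(ii) subspaces at cyclic distance at least `Δ` intersect trivially; and
(iii) a subspace at cyclic distance at least `Δ` from both `u` and `u+1`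
intersects `E u + E (u+1)` trivially. -/
theorem tim_cyclic_subspace_assignment (Δ l : ℕ) (hΔ : 1 ≤ Δ) (hl : 2 * Δ ≤ l) :
    haveI : NeZero l := ⟨by omega⟩
    ∃ E : Fin l → Submodule ℂ (Fin (2 * Δ + 1) → ℂ),
      (∀ k : Fin l, Module.finrank ℂ (E k) = Δ) ∧
      -- (i)
      (∀ k : Fin l, Module.finrank ℂ ↥(E k ⊔ E (k + 1)) ≤ Δ + 1) ∧
      -- (ii)
      (∀ j k : Fin l,
        Δ ≤ min (Nat.dist (j : ℕ) (k : ℕ)) (l - Nat.dist (j : ℕ) (k : ℕ)) →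
        E j ⊓ E k = ⊥) ∧
      -- (iii)
      (∀ w u : Fin l,
        Δ ≤ min (Nat.dist (w : ℕ) (u : ℕ)) (l - Nat.dist (w : ℕ) (u : ℕ)) →
        Δ ≤ min (Nat.dist (w : ℕ) ((u + 1 : Fin l) : ℕ))
              (l - Nat.dist (w : ℕ) ((u + 1 : Fin l) : ℕ)) →
        E w ⊓ (E u ⊔ E (u + 1)) = ⊥) := by
  haveI : NeZero l := ⟨by omega⟩
  have hlpos : 0 < l := by omega
  set N := 2 * Δ + 1 with hN
  set v : Fin l → (Fin N → ℂ) := fun t j => (((t : Fin l) : ℕ) : ℂ) ^ (j : ℕ) with hv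
  -- windows
  set win : Fin l → ℕ → Finset (Fin l) :=
    fun k m => Finset.image (fun a : Fin m => k + ((a : ℕ) : Fin l)) Finset.univ with hwin
  have hval : ∀ (k : Fin l) (m : ℕ) (a : Fin m),
      ((k + ((a : ℕ) : Fin l) : Fin l) : ℕ) = ((k : ℕ) + (a : ℕ)) % l := by
    intro k m a
    rw [Fin.val_add, Fin.val_natCast, Nat.add_mod_mod]
  have hmem : ∀ (k : Fin l) (m : ℕ) (hm : m ≤ l) (i : Fin l),
      i ∈ win k m ↔ ∃ a, a < m ∧ (i : ℕ) = ((k : ℕ) + a) % l := by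
    intro k m hm i
    simp only [hwin, Finset.mem_image, Finset.mem_univ, true_and]
    constructor
    · rintro ⟨a, rfl⟩
      exact ⟨a, a.isLt, hval k m a⟩
    · rintro ⟨a, ha, hi⟩
      refine ⟨⟨a, ha⟩, Fin.ext ?_⟩
      rw [hval k m ⟨a, ha⟩]
      exact hi.symm
  have hcard : ∀ (k : Fin l) (m : ℕ), m ≤ l → (win k m).card = m := by
    intro k m hm
    rw [hwin]
    rw [Finset.card_image_of_injective _ ?_, Finset.card_univ, Fintype.card_fin]
    intro a b hab
    have := add_left_cancel hab
    have h2 : ((a : ℕ) : Fin l) = ((b : ℕ) : Fin l) := this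
    have h3 : (a : ℕ) % l = (b : ℕ) % l := by
      have := congrArg Fin.val h2
      simpa [Fin.val_natCast] using this
    rw [Nat.mod_eq_of_lt (lt_of_lt_of_le a.isLt hm),
      Nat.mod_eq_of_lt (lt_of_lt_of_le b.isLt hm)] at h3
    exact Fin.ext h3
  -- independence of any small subfamily of v
  have hindep : ∀ s : Finset (Fin l), s.card ≤ N →
      LinearIndependent ℂ (fun i : s => v i) := by
    intro s hs
    exact vand_indep s hs
  set E : Fin l → Submodule ℂ (Fin N → ℂ) := fun k => Submodule.span ℂ (v '' ↑(win k Δ)) with hE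
  have hΔle : Δ ≤ l := by omega
  have hΔ1le : Δ + 1 ≤ l := by omega
  -- mod helper
  have hmodc : ∀ x : ℕ, x < 2 * l → x % l = x ∧ x < l ∨ x % l = x - l ∧ l ≤ x := by
    intro x hx
    rcases Nat.lt_or_ge x l with h | h
    · exact Or.inl ⟨Nat.mod_eq_of_lt h, h⟩
    · refine Or.inr ⟨?_, h⟩
      rw [Nat.mod_eq_sub_mod h, Nat.mod_eq_of_lt (by omega)]
  -- rank
  have hrank : ∀ k, Module.finrank ℂ (E k) = Δ := by
    intro k
    have hi := hindep (win k Δ) (by rw [hcard k Δ hΔle]; omega)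
    have himg : (v '' ↑(win k Δ)) = Set.range (fun i : (win k Δ) => v i) :=
      Set.image_eq_range _ _
    show Module.finrank ℂ ↥(Submodule.span ℂ (v '' ↑(win k Δ))) = Δ
    rw [himg, finrank_span_eq_card hi, Fintype.card_coe, hcard k Δ hΔle]
  -- windows of size Δ at k and k+1 sit in window of size Δ+1 at k
  have hsub : ∀ k : Fin l, win k Δ ⊆ win k (Δ + 1) ∧ win (k + 1) Δ ⊆ win k (Δ + 1) := by
    intro k
    constructor
    · intro i hi
      rw [hmem k Δ hΔle] at hi
      rw [hmem k (Δ+1) hΔ1le]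
      obtain ⟨a, ha, hia⟩ := hi
      exact ⟨a, by omega, hia⟩
    · intro i hi
      rw [hmem (k+1) Δ hΔle] at hi
      rw [hmem k (Δ+1) hΔ1le]
      obtain ⟨a, ha, hia⟩ := hi
      refine ⟨a + 1, by omega, ?_⟩
      have h1 : ((k + 1 : Fin l) : ℕ) = ((k : ℕ) + 1) % l := by
        rw [Fin.add_def]; simp
      rw [hia, h1, Nat.mod_add_mod]
      congr 1
      omega
  have hsup : ∀ k : Fin l, E k ⊔ E (k + 1) ≤ Submodule.span ℂ (v '' ↑(win k (Δ + 1))) := by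
    intro k
    apply sup_le
    · exact Submodule.span_mono (Set.image_mono (hsub k).1)
    · exact Submodule.span_mono (Set.image_mono (hsub k).2)
  refine ⟨E, hrank, ?_, ?_, ?_⟩
  · -- (i)
    intro k
    have h1 : Module.finrank ℂ ↥(E k ⊔ E (k+1)) ≤
        Module.finrank ℂ ↥(Submodule.span ℂ (v '' ↑(win k (Δ + 1)))) :=
      Submodule.finrank_mono (hsup k)
    have hi := hindep (win k (Δ+1)) (by rw [hcard k (Δ+1) hΔ1le]; omega)
    have himg : (v '' ↑(win k (Δ+1))) = Set.range (fun i : (win k (Δ+1)) => v i) :=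
      Set.image_eq_range _ _
    rw [himg, finrank_span_eq_card hi, Fintype.card_coe, hcard k (Δ+1) hΔ1le] at h1
    exact h1
  · -- (ii)
    intro j k hjk
    rw [le_min_iff, Nat.dist] at hjk
    have hd : Disjoint (win j Δ) (win k Δ) := by
      rw [Finset.disjoint_left]
      intro i hij hik
      rw [hmem j Δ hΔle] at hij
      rw [hmem k Δ hΔle] at hik
      obtain ⟨a, ha, hia⟩ := hij
      obtain ⟨b, hb, hib⟩ := hik
      have hja := hmodc ((j : ℕ) + a) (by have := j.isLt; omega)
      have hkb := hmodc ((k : ℕ) + b) (by have := k.isLt; omega)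
      have := hia.symm.trans hib
      have hjl := j.isLt; have hkl := k.isLt
      omega
    have hu : LinearIndependent ℂ (fun i : (↑(win j Δ ∪ win k Δ) : Set (Fin l)) => v i) := by
      have : ((win j Δ ∪ win k Δ : Finset (Fin l)) : Set (Fin l)) =
          ((win j Δ ∪ win k Δ : Finset (Fin l)) : Finset (Fin l)) := rfl
      apply hindep
      calc (win j Δ ∪ win k Δ).card ≤ (win j Δ).card + (win k Δ).card :=
            Finset.card_union_le _ _
        _ ≤ N := by rw [hcard j Δ hΔle, hcard k Δ hΔle]; omega
    exact disj_span v (win j Δ) (win k Δ) hd hu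
  · -- (iii)
    intro w u h1 h2
    rw [le_min_iff, Nat.dist] at h1 h2
    have hu1 : ((u + 1 : Fin l) : ℕ) = ((u : ℕ) + 1) % l := by
      rw [Fin.add_def]; simp
    rw [hu1] at h2
    have hd : Disjoint (win w Δ) (win u (Δ + 1)) := by
      rw [Finset.disjoint_left]
      intro i hiw hiu
      rw [hmem w Δ hΔle] at hiw
      rw [hmem u (Δ+1) hΔ1le] at hiu
      obtain ⟨a, ha, hia⟩ := hiw
      obtain ⟨b, hb, hib⟩ := hiu
      have hwa := hmodc ((w : ℕ) + a) (by have := w.isLt; omega)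
      have hub := hmodc ((u : ℕ) + b) (by have := u.isLt; omega)
      have hu1m := hmodc ((u : ℕ) + 1) (by have := u.isLt; omega)
      have := hia.symm.trans hib
      have hwl := w.isLt; have hul := u.isLt
      omega
    have hcu : LinearIndependent ℂ
        (fun i : (↑(win w Δ ∪ win u (Δ + 1)) : Set (Fin l)) => v i) := by
      apply hindep
      calc (win w Δ ∪ win u (Δ+1)).card ≤ (win w Δ).card + (win u (Δ+1)).card :=
            Finset.card_union_le _ _
        _ ≤ N := by rw [hcard w Δ hΔle, hcard u (Δ+1) hΔ1le]; omega
    have hdisj := disj_span v (win w Δ) (win u (Δ + 1)) hd hcu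
    rw [eq_bot_iff]
    calc E w ⊓ (E u ⊔ E (u + 1)) ≤ E w ⊓ Submodule.span ℂ (v '' ↑(win u (Δ + 1))) :=
          inf_le_inf_left _ (hsup u)
      _ = ⊥ := hdisj
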